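/- Let A_S be a real symmetric (N+1)×(N+1) matrix whose row sums are all zero (i.e. A_S·𝟏 = 0), and suppose the (N×N) lower-right principal submatrix Ā of A_S is invertible. Let J be the all-ones matrix, E₀ = e₀e₀ᵀ, and K₀ the matrix with zero first row and column and lower-right block Ā⁻¹. Then for every δ ≠ 0, (A_S + δE₀)(J/δ + K₀) = I; i.e. A_S + δE₀ is invertible with inverse J/δ + K₀. -/

import Mathlib

open Matrix Finset

theorem stmt_10 {N : ℕ}
    (AS : Matrix (Fin (N+1)) (Fin (N+1)) ℝ) (hsym : AS.IsSymm)
    (hrow : AS *ᵥ (fun _ => (1:ℝ)) = 0)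
    (Abar : Matrix (Fin N) (Fin N) ℝ)
    (hAbar : Abar = AS.submatrix Fin.succ Fin.succ)
    (hinv : IsUnit Abar.det)
    (J : Matrix (Fin (N+1)) (Fin (N+1)) ℝ) (hJ : J = of fun _ _ => (1:ℝ))
    (E0 : Matrix (Fin (N+1)) (Fin (N+1)) ℝ) (hE0 : E0 = single 0 0 1)
    (K0 : Matrix (Fin (N+1)) (Fin (N+1)) ℝ)
    (hK0 : K0 = of (Fin.cons (fun _ => 0) (fun i => Fin.cons 0 (fun j => Abar⁻¹ i j))))
    (δ : ℝ) (hδ : δ ≠ 0) :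
    (AS + δ • E0) * (δ⁻¹ • J + K0) = 1 ∧ (AS + δ • E0)⁻¹ = δ⁻¹ • J + K0 := by
  have hsym' : ∀ i j : Fin (N+1), AS i j = AS j i := by
    intro i j
    conv_lhs => rw [← hsym]
    rfl
  have hrow' : ∀ i : Fin (N+1), ∑ k, AS i k = 0 := by
    intro i
    have := congrFun hrow i
    simpa [mulVec, dotProduct] using this
  have hAinv : Abar * Abar⁻¹ = 1 := mul_nonsing_inv _ hinv
  have hAsym : ∀ a b : Fin N, Abar a b = Abar b a := by
    intro a b; rw [hAbar]; exact hsym' _ _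
  have h0 : ∀ k : Fin N, AS 0 (Fin.succ k) = -∑ l, Abar k l := by
    intro k
    have h := hrow' (Fin.succ k)
    rw [Fin.sum_univ_succ] at h
    have h2 : AS (Fin.succ k) 0 = -∑ l, AS (Fin.succ k) (Fin.succ l) := by linarith
    rw [hsym' 0, h2, hAbar]
    rfl
  have hz : ∀ x : Fin N, ((0:Fin (N+1)) = Fin.succ x) = False :=
    fun x => eq_false (Fin.succ_ne_zero x).symm
  have key : (AS + δ • E0) * (δ⁻¹ • J + K0) = 1 := by
    ext i j
    rw [mul_apply]
    simp only [Matrix.add_apply, Matrix.smul_apply, hJ, hE0, hK0, of_apply, smul_eq_mul, mul_one]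
    induction i using Fin.cases with
    | zero =>
      induction j using Fin.cases with
      | zero =>
        simp only [Fin.sum_univ_succ, single_apply_same, Fin.cons_zero, Fin.cons_succ,
          single, of_apply, Fin.succ_ne_zero, hz, and_false, false_and, if_false, add_zero,
          mul_one, mul_zero, zero_mul, one_apply_eq, and_self, if_true]
        rw [← Finset.sum_mul]
        have h := hrow' 0
        rw [Fin.sum_univ_succ] at h
        field_simp
        linarith
      | succ j' =>
        simp only [Fin.sum_univ_succ, single_apply_same, Fin.cons_zero, Fin.cons_succ,
          single, of_apply, Fin.succ_ne_zero, hz, and_false, false_and, if_false, add_zero,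
          mul_one, mul_zero, zero_mul, zero_add, and_self, if_true]
        have hneg : ∑ x : Fin N, AS 0 (Fin.succ x) * Abar⁻¹ x j' = -1 := by
          have hx : ∀ x : Fin N, AS 0 (Fin.succ x) * Abar⁻¹ x j'
              = -∑ l : Fin N, Abar l x * Abar⁻¹ x j' := by
            intro x
            rw [h0 x, neg_mul, Finset.sum_mul]
            congr 1
            exact Finset.sum_congr rfl fun l _ => by rw [hAsym x l]
          rw [Finset.sum_congr rfl fun x _ => hx x, Finset.sum_neg_distrib, Finset.sum_comm]
          have hl : ∀ l : Fin N, ∑ x : Fin N, Abar l x * Abar⁻¹ x j'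
              = (1 : Matrix (Fin N) (Fin N) ℝ) l j' := by
            intro l; rw [← hAinv, mul_apply]
          rw [Finset.sum_congr rfl fun l _ => hl l]
          simp [one_apply, Finset.sum_ite_eq']
        have h := hrow' 0
        rw [Fin.sum_univ_succ] at h
        have hrw : ∀ x : Fin N, AS 0 (Fin.succ x) * (δ⁻¹ + Abar⁻¹ x j')
            = AS 0 (Fin.succ x) * δ⁻¹ + AS 0 (Fin.succ x) * Abar⁻¹ x j' := fun x => by ring
        rw [Finset.sum_congr rfl fun x _ => hrw x, Finset.sum_add_distrib, ← Finset.sum_mul, hneg]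
        have h10 : (1 : Matrix (Fin (N+1)) (Fin (N+1)) ℝ) 0 (Fin.succ j') = 0 := by
          simp [one_apply, (Fin.succ_ne_zero j').symm]
        rw [h10]
        field_simp
        linarith
    | succ i' =>
      induction j using Fin.cases with
      | zero =>
        simp only [Fin.sum_univ_succ, Fin.cons_zero, Fin.cons_succ,
          single, of_apply, Fin.succ_ne_zero, (Fin.succ_ne_zero i').symm ,false_and,
          and_false, if_false, add_zero, mul_one, mul_zero, zero_mul]
        rw [← Finset.sum_mul]
        have h := hrow' (Fin.succ i')
        rw [Fin.sum_univ_succ] at h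
        have h10 : (1 : Matrix (Fin (N+1)) (Fin (N+1)) ℝ) (Fin.succ i') 0 = 0 := by
          simp [one_apply, Fin.succ_ne_zero i']
        rw [h10, ← add_mul]
        rw [show AS (Fin.succ i') 0 + ∑ x : Fin N, AS (Fin.succ i') (Fin.succ x) = 0 from h]
        ring
      | succ j' =>
        simp only [Fin.sum_univ_succ, Fin.cons_zero, Fin.cons_succ,
          single, of_apply, Fin.succ_ne_zero, (Fin.succ_ne_zero i').symm, false_and,
          and_false, if_false, add_zero, mul_one, mul_zero, zero_mul]
        have hd : ∑ x : Fin N, AS (Fin.succ i') (Fin.succ x) * Abar⁻¹ x j'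
            = (1 : Matrix (Fin N) (Fin N) ℝ) i' j' := by
          rw [← hAinv, mul_apply]
          exact Finset.sum_congr rfl fun x _ => by rw [hAbar]; rfl
        have hrw : ∀ x : Fin N, AS (Fin.succ i') (Fin.succ x) * (δ⁻¹ + Abar⁻¹ x j')
            = AS (Fin.succ i') (Fin.succ x) * δ⁻¹
              + AS (Fin.succ i') (Fin.succ x) * Abar⁻¹ x j' := fun x => by ring
        rw [Finset.sum_congr rfl fun x _ => hrw x, Finset.sum_add_distrib, ← Finset.sum_mul, hd]
        have h := hrow' (Fin.succ i')
        rw [Fin.sum_univ_succ] at h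
        have h11 : (1 : Matrix (Fin (N+1)) (Fin (N+1)) ℝ) (Fin.succ i') (Fin.succ j')
            = (1 : Matrix (Fin N) (Fin N) ℝ) i' j' := by
          simp [one_apply, Fin.succ_inj]
        rw [h11]
        have : AS (Fin.succ i') 0 = -∑ x : Fin N, AS (Fin.succ i') (Fin.succ x) := by linarith
        rw [this]
        ring
  exact ⟨key, inv_eq_right_inv key⟩
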